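/- Let C be a triangulated category, n ≥ 1, and 𝒟 a functorially finite (n+1)-rigid subcategory satisfying ⋂_{k=1}^{n} {}^{⊥_k}𝒟 = ⋂_{k=1}^{n} 𝒟^{⊥_k}; denote this common subcategory by Z. Then: (1) Z is extension-closed in C, i.e., for every distinguished triangle A → B → C → ΣA with A, C ∈ Z one has B ∈ Z; (2) (Z, Z) is a 𝒟-mutation pair, i.e., for every U ∈ Z there exists a distinguished triangle U →f D →g V → ΣU with D ∈ 𝒟 and V ∈ Z such that f is a left 𝒟-approximation of U and g is a right 𝒟-approximation of V, and dually, for every V ∈ Z there exists such a distinguished triangle with U ∈ Z. -/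

import Mathlib

open CategoryTheory Category Limits Pretriangulated ZeroObject

variable {C : Type*} [Category C] [Preadditive C] [HasZeroObject C]
  [HasShift C ℤ] [∀ n : ℤ, (shiftFunctor C n).Additive] [Pretriangulated C]
  [IsTriangulated C]

/-- `f : A ⟶ B` is a right `X`-approximation of `B`. -/
def IsRightApprox (X : Set C) {A B : C} (f : A ⟶ B) : Prop :=
  A ∈ X ∧ ∀ A' : C, A' ∈ X → ∀ g : A' ⟶ B, ∃ h : A' ⟶ A, h ≫ f = g

/-- `f : A ⟶ B` is a left `X`-approximation of `A`. -/
def IsLeftApprox (X : Set C) {A B : C} (f : A ⟶ B) : Prop :=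
  B ∈ X ∧ ∀ B' : C, B' ∈ X → ∀ g : A ⟶ B', ∃ h : B ⟶ B', f ≫ h = g

/-- `X` is contravariantly finite: every object admits a right `X`-approximation. -/
def ContravariantlyFinite (X : Set C) : Prop :=
  ∀ Z : C, ∃ (A : C) (f : A ⟶ Z), IsRightApprox X f

/-- `X` is covariantly finite: every object admits a left `X`-approximation. -/
def CovariantlyFinite (X : Set C) : Prop :=
  ∀ Z : C, ∃ (B : C) (f : Z ⟶ B), IsLeftApprox X f

/-- `D` is `(n+1)`-rigid: `Hom(D, Σ^k D') = 0` for all `D, D' ∈ D` and `1 ≤ k ≤ n`. -/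
def IsRigid (n : ℕ) (D : Set C) : Prop :=
  ∀ d ∈ D, ∀ d' ∈ D, ∀ k : ℕ, 1 ≤ k → k ≤ n → ∀ f : d ⟶ d'⟦(k : ℤ)⟧, f = 0

/-- `⋂_{k=1}^{n} {}^{⊥_k} D`. -/
def leftPerpInter (D : Set C) (n : ℕ) : Set C :=
  {M : C | ∀ k : ℕ, 1 ≤ k → k ≤ n → ∀ d ∈ D, ∀ f : M ⟶ d⟦(k : ℤ)⟧, f = 0}

/-- `⋂_{k=1}^{n} D^{⊥_k}`. -/
def rightPerpInter (D : Set C) (n : ℕ) : Set C :=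
  {N : C | ∀ k : ℕ, 1 ≤ k → k ≤ n → ∀ d ∈ D, ∀ f : d ⟶ N⟦(k : ℤ)⟧, f = 0}

section Helpers

lemma hom_zero_of_iso {X Y Z : C} (e : Y ≅ Z) (hz : ∀ x : X ⟶ Y, x = 0)
    (x : X ⟶ Z) : x = 0 := by
  have h1 : x = (x ≫ e.inv) ≫ e.hom := by simp
  rw [h1, hz (x ≫ e.inv), zero_comp]

lemma rigid_one {n : ℕ} {D : Set C} (hrigid : IsRigid n D) (hn : 1 ≤ n)
    {d d' : C} (hd : d ∈ D) (hd' : d' ∈ D) (f : d ⟶ d'⟦(1 : ℤ)⟧) : f = 0 := by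
  have h := hrigid d hd d' hd' 1 le_rfl hn
  rw [Nat.cast_one] at h
  exact h f

lemma leftPerp_one {n : ℕ} {D : Set C} (hn : 1 ≤ n) {M : C}
    (hM : M ∈ leftPerpInter D n) {d : C} (hd : d ∈ D) (f : M ⟶ d⟦(1 : ℤ)⟧) : f = 0 := by
  have h := hM 1 le_rfl hn d hd
  rw [Nat.cast_one] at h
  exact h f

lemma rightPerp_one {n : ℕ} {D : Set C} (hn : 1 ≤ n) {N : C}
    (hN : N ∈ rightPerpInter D n) {d : C} (hd : d ∈ D) (f : d ⟶ N⟦(1 : ℤ)⟧) : f = 0 := by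
  have h := hN 1 le_rfl hn d hd
  rw [Nat.cast_one] at h
  exact h f

/-- The cone of a left `D`-approximation of `U ∈ Z` is again in `Z` (left-perp form). -/
lemma cone_mem_leftPerp {n : ℕ} (hn : 1 ≤ n) {D : Set C} (hrigid : IsRigid n D)
    {U d V : C} (hd : d ∈ D) (hU : U ∈ leftPerpInter D n)
    {f : U ⟶ d} {g : d ⟶ V} {h : V ⟶ U⟦(1 : ℤ)⟧}
    (hT : Triangle.mk f g h ∈ distTriang C)
    (happrox : ∀ d' ∈ D, ∀ u : U ⟶ d', ∃ w : d ⟶ d', f ≫ w = u) :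
    V ∈ leftPerpInter D n := by
  intro k hk1 hkn d' hd' φ
  have hgφ : (Triangle.mk f g h).mor₂ ≫ φ = 0 := hrigid d hd d' hd' k hk1 hkn _
  obtain ⟨ψ, hψ⟩ := Triangle.yoneda_exact₃ _ hT φ hgφ
  rcases eq_or_lt_of_le hk1 with h1 | h2
  · -- k = 1
    subst h1
    let ψ' : (shiftFunctor C (1 : ℤ)).obj U ⟶ (shiftFunctor C (1 : ℤ)).obj d' := ψ
    obtain ⟨u, hu⟩ := (shiftFunctor C (1 : ℤ)).map_surjective ψ'
    obtain ⟨w, hw⟩ := happrox d' hd' u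
    have hz : h ≫ (shiftFunctor C (1 : ℤ)).map f = 0 := comp_distTriang_mor_zero₃₁ _ hT
    have hφ : φ = h ≫ ψ' := hψ
    rw [hφ, ← hu, ← hw, Functor.map_comp, ← assoc, hz, zero_comp]
  · -- 2 ≤ k
    have hm1 : 1 ≤ k - 1 := by omega
    have hmn : k - 1 ≤ n := by omega
    have e : shiftFunctor C ((k : ℕ) : ℤ) ≅
        shiftFunctor C (((k - 1 : ℕ) : ℕ) : ℤ) ⋙ shiftFunctor C (1 : ℤ) :=
      shiftFunctorAdd' C (((k - 1 : ℕ) : ℕ) : ℤ) 1 ((k : ℕ) : ℤ) (by omega)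
    have hψ0 : ψ = 0 := by
      have h1 : ψ ≫ e.hom.app d' = 0 := by
        obtain ⟨τ, hτ⟩ := (shiftFunctor C (1 : ℤ)).map_surjective (ψ ≫ e.hom.app d')
        rw [← hτ, hU (k - 1) hm1 hmn d' hd' τ]; exact Functor.map_zero _ _ _
      have : ψ = (ψ ≫ e.hom.app d') ≫ e.inv.app d' := by simp
      rw [this, h1, zero_comp]
    rw [hψ, hψ0, comp_zero]; rfl

/-- The co-cone of a right `D`-approximation of `V ∈ Z` is again in `Z` (right-perp form). -/
lemma cocone_mem_rightPerp {n : ℕ} (hn : 1 ≤ n) {D : Set C} (hrigid : IsRigid n D)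
    (hZeq : leftPerpInter D n = rightPerpInter D n)
    {U d V : C} (hd : d ∈ D) (hV : V ∈ leftPerpInter D n)
    {f : U ⟶ d} {g : d ⟶ V} {h : V ⟶ U⟦(1 : ℤ)⟧}
    (hT : Triangle.mk f g h ∈ distTriang C)
    (happrox : ∀ d' ∈ D, ∀ b : d' ⟶ V, ∃ c : d' ⟶ d, c ≫ g = b) :
    U ∈ rightPerpInter D n := by
  have hVr : V ∈ rightPerpInter D n := hZeq ▸ hV
  intro k hk1 hkn d'' hd'' a
  rcases eq_or_lt_of_le hk1 with h1 | h2
  · -- k = 1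
    subst h1
    let a' : d'' ⟶ (Triangle.mk f g h).rotate.obj₃ := a
    have hz : a' ≫ (Triangle.mk f g h).rotate.mor₃ = 0 := by
      have h0 : a' ≫ (shiftFunctor C (1 : ℤ)).map f = 0 :=
        rigid_one hrigid hn hd'' hd _
      dsimp only [Triangle.rotate, Triangle.mk]
      rw [Preadditive.comp_neg]; exact neg_eq_zero.mpr h0
    obtain ⟨b, hb⟩ := Triangle.coyoneda_exact₃ _ (rot_of_distTriang _ hT) a' hz
    obtain ⟨c, hc⟩ := happrox d'' hd'' b
    have hgh : g ≫ h = 0 := comp_distTriang_mor_zero₂₃ _ hT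
    have ha' : a' = b ≫ h := hb
    have : a' = 0 := by rw [ha', ← hc]; exact (assoc c g h).trans (by rw [hgh]; exact comp_zero)
    exact this
  · -- 2 ≤ k
    have hm1 : 1 ≤ k - 1 := by omega
    have hmn : k - 1 ≤ n := by omega
    set m : ℤ := ((k - 1 : ℕ) : ℤ) with hm
    have e : shiftFunctor C ((k : ℕ) : ℤ) ≅ shiftFunctor C m ⋙ shiftFunctor C (1 : ℤ) :=
      shiftFunctorAdd' C m 1 ((k : ℕ) : ℤ) (by omega)
    have hT' : (Triangle.shiftFunctor C m).obj (Triangle.mk f g h) ∈ distTriang C :=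
      Triangle.shift_distinguished _ hT m
    set T' := (Triangle.shiftFunctor C m).obj (Triangle.mk f g h) with hT'def
    have hz : (a ≫ e.hom.app U) ≫ T'.rotate.mor₃ = 0 := by
      apply hom_zero_of_iso (X := d'') (e.app d)
      intro x
      exact hrigid d'' hd'' d hd k hk1 hkn x
    obtain ⟨b, hb⟩ := Triangle.coyoneda_exact₃ _ (rot_of_distTriang _ hT')
      (a ≫ e.hom.app U) hz
    have hb0 : b = 0 := hVr (k - 1) hm1 hmn d'' hd'' b
    have ha'0 : a ≫ e.hom.app U = 0 := by rw [hb0] at hb; exact hb.trans zero_comp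
    have : a = (a ≫ e.hom.app U) ≫ e.inv.app U := by simp
    rw [this, ha'0, zero_comp]

/-- A cocompletion of a right approximation `g : d ⟶ V` with `V ∈ Z` gives a left
approximation `f`. -/
lemma left_approx_of_cocone {n : ℕ} (hn : 1 ≤ n) {D : Set C}
    {U d V : C} (hV : V ∈ leftPerpInter D n)
    {f : U ⟶ d} {g : d ⟶ V} {h : V ⟶ U⟦(1 : ℤ)⟧}
    (hT : Triangle.mk f g h ∈ distTriang C) :
    ∀ d'' ∈ D, ∀ u : U ⟶ d'', ∃ w : d ⟶ d'', f ≫ w = u := by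
  intro d'' hd'' u
  set T2 := (Triangle.mk f g h).rotate.rotate with hT2def
  have hT2 : T2 ∈ distTriang C := rot_of_distTriang _ (rot_of_distTriang _ hT)
  have hz : T2.mor₁ ≫ (shiftFunctor C (1 : ℤ)).map u = 0 := by
    have : h ≫ (shiftFunctor C (1 : ℤ)).map u = 0 :=
      leftPerp_one hn hV hd'' _
    exact this
  obtain ⟨χ, hχ⟩ := Triangle.yoneda_exact₂ _ hT2 ((shiftFunctor C (1 : ℤ)).map u) hz
  obtain ⟨w, hw⟩ := (shiftFunctor C (1 : ℤ)).map_surjective χ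
  refine ⟨-w, (shiftFunctor C (1 : ℤ)).map_injective ?_⟩
  have hmor₂ : T2.mor₂ = -(shiftFunctor C (1 : ℤ)).map f := rfl
  erw [Functor.map_comp, Functor.map_neg, hχ, hmor₂, ← hw, Preadditive.comp_neg,
    Preadditive.neg_comp]
  rfl

end Helpers
/-- for a functorially finite `(n+1)`-rigid subcategory `D` with
`⋂ₖ {}^{⊥ₖ}D = ⋂ₖ D^{⊥ₖ} =: Z`, the subcategory `Z` is extension closed and `(Z, Z)`
is a `D`-mutation pair. -/
theorem stmt4 (n : ℕ) (hn : 1 ≤ n) (D : Set C)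
    (hcontra : ContravariantlyFinite D) (hcov : CovariantlyFinite D)
    (hrigid : IsRigid n D)
    (hZ : leftPerpInter D n = rightPerpInter D n) :
    (∀ ⦃A B Z : C⦄ (f : A ⟶ B) (g : B ⟶ Z) (h : Z ⟶ A⟦(1 : ℤ)⟧),
        (Triangle.mk f g h ∈ distTriang C) →
        A ∈ leftPerpInter D n → Z ∈ leftPerpInter D n → B ∈ leftPerpInter D n) ∧
    (∀ U ∈ leftPerpInter D n, ∃ (d V : C) (_ : d ∈ D) (_ : V ∈ leftPerpInter D n)
        (f : U ⟶ d) (g : d ⟶ V) (h : V ⟶ U⟦(1 : ℤ)⟧),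
        (Triangle.mk f g h ∈ distTriang C) ∧ IsLeftApprox D f ∧ IsRightApprox D g) ∧
    (∀ V ∈ leftPerpInter D n, ∃ (U d : C) (_ : U ∈ leftPerpInter D n) (_ : d ∈ D)
        (f : U ⟶ d) (g : d ⟶ V) (h : V ⟶ U⟦(1 : ℤ)⟧),
        (Triangle.mk f g h ∈ distTriang C) ∧ IsLeftApprox D f ∧ IsRightApprox D g) := by
  refine ⟨?_, ?_, ?_⟩
  · -- extension closed
    intro A B Z f g h hT hA hZ' k hk1 hkn d hd φ
    have hfφ : (Triangle.mk f g h).mor₁ ≫ φ = 0 := hA k hk1 hkn d hd _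
    obtain ⟨ψ, hψ⟩ := Triangle.yoneda_exact₂ _ hT φ hfφ
    have hψ0 : ψ = 0 := hZ' k hk1 hkn d hd ψ
    rw [hψ, hψ0, comp_zero]; rfl
  · -- first half of mutation pair
    intro U hU
    obtain ⟨d, f, hd, happrox⟩ := hcov U
    obtain ⟨V, g, h, hT⟩ := distinguished_cocone_triangle f
    have happrox' : ∀ d' ∈ D, ∀ u : U ⟶ d', ∃ w : d ⟶ d', f ≫ w = u :=
      fun d' hd' u => happrox d' hd' u
    have hV : V ∈ leftPerpInter D n := cone_mem_leftPerp hn hrigid hd hU hT happrox'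
    have hUr : U ∈ rightPerpInter D n := hZ ▸ hU
    refine ⟨d, V, hd, hV, f, g, h, hT, ⟨hd, happrox⟩, hd, ?_⟩
    intro d'' hd'' a
    have hz : a ≫ (Triangle.mk f g h).mor₃ = 0 := rightPerp_one hn hUr hd'' _
    obtain ⟨b, hb⟩ := Triangle.coyoneda_exact₃ _ hT a hz
    exact ⟨b, hb.symm⟩
  · -- second half of mutation pair
    intro V hV
    obtain ⟨d, g, hd, happrox⟩ := hcontra V
    obtain ⟨U, f, h, hT⟩ := distinguished_cocone_triangle₁ g
    have happrox' : ∀ d' ∈ D, ∀ b : d' ⟶ V, ∃ c : d' ⟶ d, c ≫ g = b :=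
      fun d' hd' b => happrox d' hd' b
    have hUr : U ∈ rightPerpInter D n :=
      cocone_mem_rightPerp hn hrigid hZ hd hV hT happrox'
    have hU : U ∈ leftPerpInter D n := hZ.symm ▸ hUr
    refine ⟨U, d, hU, hd, f, g, h, hT, ⟨hd, ?_⟩, hd, happrox⟩
    intro d'' hd'' u
    exact left_approx_of_cocone hn hV hT d'' hd'' u
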